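/- Let I, J, R be positive integers. The set of pairs (X, Y) ∈ ℝ^{I×R} × ℝ^{J×R} for which the Khatri–Rao product Y ⊙ X does not have rank equal to min(IJ, R) has Lebesgue measure zero in ℝ^{I×R} × ℝ^{J×R}. In other words, for generic X and Y, rank(Y ⊙ X) = min(IJ, R). -/

import Mathlib

section AuxLemmas
open MeasureTheory MvPolynomial


/-- Currying is measure preserving. -/
theorem volume_curry (κ : Type*) [Fintype κ] : ∀ (n : ℕ),
    MeasurePreserving (fun (x : Fin n × κ → ℝ) (i : Fin n) (k : κ) => x (i, k))
      volume volume := by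
  intro n
  induction n with
  | zero =>
      have hE : IsEmpty (Fin 0 × κ) := ⟨fun p => p.1.elim0⟩
      constructor
      · exact measurable_of_subsingleton_codomain _
      · rw [volume_pi, volume_pi, Measure.pi_of_empty, Measure.pi_of_empty,
          Measure.map_dirac' (measurable_of_subsingleton_codomain _)]
        exact congrArg _ (Subsingleton.elim _ _)
  | succ n ih =>
      -- the coordinate shuffle on indices
      let ψ : (κ ⊕ (Fin n × κ)) ≃ (Fin (n + 1) × κ) :=
        { toFun := Sum.elim (fun k => (0, k)) (fun p => (p.1.succ, p.2))
          invFun := fun p => Fin.cases (Sum.inl p.2) (fun j => Sum.inr (j, p.2)) p.1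
          left_inv := by rintro (k | ⟨j, k⟩) <;> simp
          right_inv := by
            rintro ⟨i, k⟩
            refine Fin.cases ?_ (fun j => ?_) i <;> simp }
      have h1 : MeasurePreserving
          ((MeasurableEquiv.piCongrLeft (fun _ : Fin (n+1) × κ => ℝ) ψ).symm)
          volume volume :=
        (volume_measurePreserving_piCongrLeft (fun _ => ℝ) ψ).symm _
      have h2 : MeasurePreserving
          (MeasurableEquiv.sumPiEquivProdPi (fun _ : κ ⊕ (Fin n × κ) => ℝ))
          volume volume :=
        volume_measurePreserving_sumPiEquivProdPi _
      have h3 : MeasurePreserving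
          (Prod.map (id : (κ → ℝ) → (κ → ℝ))
            (fun (x : Fin n × κ → ℝ) (i : Fin n) (k : κ) => x (i, k)))
          volume volume :=
        (MeasurePreserving.id volume).prod ih
      have h4 : MeasurePreserving
          ((MeasurableEquiv.piFinSuccAbove (fun _ : Fin (n+1) => (κ → ℝ)) 0).symm)
          volume volume :=
        (volume_preserving_piFinSuccAbove (fun _ => (κ → ℝ)) 0).symm _
      have hcomp := ((h4.comp h3).comp h2).comp h1
      convert hcomp using 1
      funext x
      simp only [Function.comp_apply]
      have hsymm : (MeasurableEquiv.piCongrLeft (fun _ : Fin (n+1) × κ => ℝ) ψ).symm x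
          = fun s => x (ψ s) := rfl
      rw [hsymm]
      have hsum : (MeasurableEquiv.sumPiEquivProdPi (fun _ : κ ⊕ (Fin n × κ) => ℝ))
          (fun s => x (ψ s))
          = (fun k => x (ψ (Sum.inl k)), fun p => x (ψ (Sum.inr p))) := rfl
      rw [hsum]
      funext i k
      refine Fin.cases ?_ (fun j => ?_) i
      · simp [MeasurableEquiv.piFinSuccAbove, ψ]
      · simp [MeasurableEquiv.piFinSuccAbove, ψ, Fin.insertNthEquiv]


theorem nullpoly_fin : ∀ (n : ℕ) (p : MvPolynomial (Fin n) ℝ), p ≠ 0 →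
    volume {x : Fin n → ℝ | eval x p = 0} = 0 := by
  intro n
  induction n with
  | zero =>
      intro p hp
      obtain ⟨c, rfl⟩ := MvPolynomial.C_surjective (Fin 0) p
      have hc : c ≠ 0 := fun h => hp (by simp [h])
      have : {x : Fin 0 → ℝ | eval x (C c) = 0} = ∅ := by
        ext x; simp [hc]
      rw [this]
      exact measure_empty
  | succ n ih =>
      intro p hp
      set q : Polynomial (MvPolynomial (Fin n) ℝ) := finSuccEquiv ℝ n p with hqdef
      have hq : q ≠ 0 := by
        intro h
        apply hp
        have h2 : (finSuccEquiv ℝ n).symm q = 0 := by rw [h]; simp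
        rwa [hqdef, AlgEquiv.symm_apply_apply] at h2
      have hlc : q.leadingCoeff ≠ 0 := Polynomial.leadingCoeff_ne_zero.mpr hq
      -- the bad set
      set A : Set (Fin (n+1) → ℝ) := {x | eval x p = 0} with hAdef
      have hA : MeasurableSet A :=
        (isClosed_eq (MvPolynomial.continuous_eval p) continuous_const).measurableSet
      set B : Set ((Fin n → ℝ) × ℝ) := {sy | eval (Fin.cons sy.2 sy.1) p = 0} with hBdef
      have hgcont : Continuous fun sy : (Fin n → ℝ) × ℝ => (Fin.cons sy.2 sy.1 : Fin (n+1) → ℝ) := by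
        apply continuous_pi
        intro i
        refine Fin.cases ?_ (fun j => ?_) i
        · simpa using continuous_snd
        · simp only [Fin.cons_succ]; exact (continuous_apply j).comp continuous_fst
      have hB : MeasurableSet B :=
        (isClosed_eq ((MvPolynomial.continuous_eval p).comp hgcont) continuous_const).measurableSet
      have hF : MeasurePreserving
          (Prod.swap ∘ (MeasurableEquiv.piFinSuccAbove (fun _ : Fin (n+1) => ℝ) 0))
          volume volume :=
        Measure.measurePreserving_swap.comp (volume_preserving_piFinSuccAbove (fun _ => ℝ) 0)
      have hAB : A = (Prod.swap ∘ (MeasurableEquiv.piFinSuccAbove (fun _ : Fin (n+1) => ℝ) 0)) ⁻¹' B := by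
        ext x
        have hx2 : (Fin.cons (x 0) (fun j => x j.succ) : Fin (n+1) → ℝ) = x :=
          funext (fun i => Fin.cases rfl (fun j => rfl) i)
        simp only [hAdef, hBdef, Set.mem_setOf_eq, Set.mem_preimage, Function.comp_apply]
        rw [show (Prod.swap ((MeasurableEquiv.piFinSuccAbove (fun _ : Fin (n+1) => ℝ) 0) x))
            = (fun j => x ((0 : Fin (n+1)).succAbove j), x 0) from rfl]
        simp only [Fin.succAbove_zero]
        rw [hx2]
      rw [hAB, hF.measure_preimage hB.nullMeasurableSet]
      refine (Measure.measure_prod_null hB).mpr ?_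
      have hN : volume {s : Fin n → ℝ | eval s q.leadingCoeff = 0} = 0 := ih _ hlc
      have hslice : ∀ s : Fin n → ℝ, eval s q.leadingCoeff ≠ 0 →
          volume (Prod.mk s ⁻¹' B) = 0 := by
        intro s hs
        have hmap : Polynomial.map (eval s) q ≠ 0 := by
          intro h
          apply hs
          have h2 : (Polynomial.map (eval s) q).coeff q.natDegree = 0 := by rw [h]; simp
          rw [Polynomial.coeff_map] at h2
          exact h2
        have hfin : (Prod.mk s ⁻¹' B).Finite := by
          have : Prod.mk s ⁻¹' B = {y : ℝ | (Polynomial.map (eval s) q).IsRoot y} := by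
            ext y
            simp only [hBdef, Set.mem_preimage, Set.mem_setOf_eq, Polynomial.IsRoot]
            rw [eval_eq_eval_mv_eval']
          rw [this]
          exact Polynomial.finite_setOf_isRoot hmap
        exact hfin.measure_zero _
      -- a.e. statement
      have : {s : Fin n → ℝ | ¬ volume (Prod.mk s ⁻¹' B) = 0} ⊆
          {s : Fin n → ℝ | eval s q.leadingCoeff = 0} := by
        intro s hs
        by_contra h
        exact hs (hslice s h)
      have h0 : ∀ᵐ s : Fin n → ℝ, volume (Prod.mk s ⁻¹' B) = 0 := by
        rw [MeasureTheory.ae_iff]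
        exact measure_mono_null this hN
      filter_upwards [h0] with s hs
      exact hs

theorem nullpoly (ι : Type*) [Fintype ι] (p : MvPolynomial ι ℝ) (hp : p ≠ 0) :
    volume {x : ι → ℝ | eval x p = 0} = 0 := by
  classical
  set n := Fintype.card ι
  set e : Fin n ≃ ι := (Fintype.equivFin ι).symm with he
  have hΨ : MeasurePreserving
      ((MeasurableEquiv.piCongrLeft (fun _ : ι => ℝ) e).symm) volume volume :=
    (volume_measurePreserving_piCongrLeft (fun _ => ℝ) e).symm _
  have hsymm : ∀ z : ι → ℝ,
      (MeasurableEquiv.piCongrLeft (fun _ : ι => ℝ) e).symm z = fun k => z (e k) := fun _ => rfl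
  have hrp : rename (⇑e.symm) p ≠ 0 := fun h => hp ((rename_injective _ e.symm.injective) (by simpa using h))
  have hset : {z : ι → ℝ | eval z p = 0}
      = (MeasurableEquiv.piCongrLeft (fun _ : ι => ℝ) e).symm ⁻¹'
        {x : Fin n → ℝ | eval x (rename (⇑e.symm) p) = 0} := by
    ext z
    simp only [Set.mem_setOf_eq, Set.mem_preimage, hsymm, eval_rename]
    have : ((fun k => z (e k)) ∘ ⇑e.symm) = z := by
      funext i; simp
    rw [this]
  rw [hset, hΨ.measure_preimage]
  · exact nullpoly_fin n _ hrp
  · exact (isClosed_eq (MvPolynomial.continuous_eval (rename (⇑e.symm) p)) continuous_const).measurableSet.nullMeasurableSet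

end AuxLemmas

/-- The Khatri–Rao (columnwise Kronecker) product: for `A : α × γ` and `B : β × γ`
matrices, `(khatriRao A B) (i, j) r = A i r * B j r`, i.e. the `r`-th column of
`khatriRao A B` is the Kronecker product of the `r`-th columns of `A` and `B`. -/
def khatriRao {α β γ : Type*} (A : Matrix α γ ℝ) (B : Matrix β γ ℝ) :
    Matrix (α × β) γ ℝ :=
  Matrix.of fun p r => A p.1 r * B p.2 r


section Aux2
open MeasureTheory MvPolynomial

lemma rank_submatrix_le' {m' n' k' l' : Type*} [Fintype m'] [Fintype n'] [Fintype k']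
    [Fintype l'] [DecidableEq m'] [DecidableEq n']
    (f : k' → m') (g : l' → n') (M : Matrix m' n' ℝ) :
    (M.submatrix f g).rank ≤ M.rank := by
  have hM : M.submatrix f g =
      (Matrix.of fun k x => if f k = x then (1:ℝ) else 0) * M *
        (Matrix.of fun x l => if x = g l then (1:ℝ) else 0) := by
    ext k l
    simp [Matrix.mul_apply, Finset.sum_ite_eq, Finset.sum_ite_eq', ite_mul, mul_ite]
  rw [hM]
  exact le_trans (Matrix.rank_mul_le_left _ _) (Matrix.rank_mul_le_right _ _)

/-- For generic `X ∈ ℝ^{I×R}` and `Y ∈ ℝ^{J×R}`, the Khatri–Rao product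
`Y ⊙ X` has rank `min (I*J) R`: the set of pairs `(X, Y)` where this fails has
Lebesgue measure zero. -/
theorem khatriRao_generic_rank (I J R : ℕ) (hI : 0 < I) (hJ : 0 < J) (hR : 0 < R) :
    MeasureTheory.volume
      {p : (Fin I → Fin R → ℝ) × (Fin J → Fin R → ℝ) |
        (khatriRao (Matrix.of p.2) (Matrix.of p.1)).rank ≠ min (I * J) R} = 0 := by
  classical
  set m := min (I * J) R with hm
  have hmIJ : m ≤ I * J := min_le_left _ _
  have hmR : m ≤ R := min_le_right _ _
  have hρ1 : ∀ k : Fin m, (k : ℕ) / I < J := by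
    intro k
    rw [Nat.div_lt_iff_lt_mul hI]
    exact lt_of_lt_of_le k.2 (le_of_le_of_eq hmIJ (Nat.mul_comm I J))
  set ρ : Fin m → Fin J × Fin I :=
    fun k => (⟨(k : ℕ) / I, hρ1 k⟩, ⟨(k : ℕ) % I, Nat.mod_lt _ hI⟩) with hρ
  set c : Fin m → Fin R := Fin.castLE hmR with hc
  set ι : Type := (Fin I × Fin R) ⊕ (Fin J × Fin R) with hι
  set Mpoly : Matrix (Fin m) (Fin m) (MvPolynomial ι ℝ) :=
    Matrix.of (fun k l => X (Sum.inr ((ρ k).1, c l)) * X (Sum.inl ((ρ k).2, c l))) with hMp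
  set q : MvPolynomial ι ℝ := Mpoly.det with hq
  set G : ((Fin I → Fin R → ℝ) × (Fin J → Fin R → ℝ)) → ℝ :=
    fun p => ((khatriRao (Matrix.of p.2) (Matrix.of p.1)).submatrix ρ c).det with hG
  -- `q` is not the zero polynomial
  have hq0 : q ≠ 0 := by
    intro h0
    set x₀ : ι → ℝ := Sum.elim (fun a => (((a.2 : ℕ) : ℝ) + 1) ^ (a.1 : ℕ))
      (fun a => (((a.2 : ℕ) : ℝ) + 1) ^ (I * (a.1 : ℕ))) with hx₀
    have hev : eval x₀ q = 0 := by rw [h0]; simp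
    have hdet : eval x₀ q = (Mpoly.map (eval x₀)).det := RingHom.map_det _ _
    have hvd : Mpoly.map (eval x₀) =
        (Matrix.vandermonde fun l : Fin m => (((c l : ℕ) : ℝ) + 1)).transpose := by
      ext k l
      simp only [hMp, Matrix.map_apply, Matrix.of_apply, map_mul, eval_X, hx₀,
        Sum.elim_inr, Sum.elim_inl, Matrix.transpose_apply, Matrix.vandermonde_apply]
      rw [← pow_add]
      congr 1
      simpa [hρ] using Nat.div_add_mod (k : ℕ) I
    have hinj : Function.Injective fun l : Fin m => (((c l : ℕ) : ℝ) + 1) := by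
      intro a b hab
      simp only [] at hab
      have h2 : ((c a : ℕ) : ℝ) = ((c b : ℕ) : ℝ) := by linarith
      exact Fin.castLE_injective hmR (Fin.ext (Nat.cast_injective h2))
    rw [hdet, hvd, Matrix.det_transpose] at hev
    exact (Matrix.det_vandermonde_ne_zero_iff.mpr hinj) hev
  -- bad set is contained in the zero set of `G`
  have hsub : {p : (Fin I → Fin R → ℝ) × (Fin J → Fin R → ℝ) |
      (khatriRao (Matrix.of p.2) (Matrix.of p.1)).rank ≠ m} ⊆ {p | G p = 0} := by
    intro p hp
    by_contra hGp
    apply hp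
    have hunit : IsUnit ((khatriRao (Matrix.of p.2) (Matrix.of p.1)).submatrix ρ c) :=
      (Matrix.isUnit_iff_isUnit_det _).mpr (isUnit_iff_ne_zero.mpr hGp)
    have h1 : ((khatriRao (Matrix.of p.2) (Matrix.of p.1)).submatrix ρ c).rank = m := by
      rw [Matrix.rank_of_isUnit _ hunit, Fintype.card_fin]
    have h2 : m ≤ (khatriRao (Matrix.of p.2) (Matrix.of p.1)).rank :=
      h1 ▸ rank_submatrix_le' ρ c _
    have h3 : (khatriRao (Matrix.of p.2) (Matrix.of p.1)).rank ≤ m := by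
      apply le_min
      · calc (khatriRao (Matrix.of p.2) (Matrix.of p.1)).rank
            ≤ Fintype.card (Fin J × Fin I) := Matrix.rank_le_card_height _
          _ = I * J := by simp [Fintype.card_prod, Nat.mul_comm]
      · simpa using Matrix.rank_le_card_width (khatriRao (Matrix.of p.2) (Matrix.of p.1))
    exact le_antisymm h3 h2
  -- transfer measure along a measure-preserving coordinate shuffle
  set Φ : (ι → ℝ) → ((Fin I → Fin R → ℝ) × (Fin J → Fin R → ℝ)) :=
    fun x => (fun i r => x (Sum.inl (i, r)), fun j r => x (Sum.inr (j, r))) with hΦ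
  have hΦmp : MeasurePreserving Φ volume volume := by
    have h1 := volume_measurePreserving_sumPiEquivProdPi (fun _ : ι => ℝ)
    have h2 := (volume_curry (Fin R) I).prod (volume_curry (Fin R) J)
    have h3 := h2.comp h1
    exact h3
  have hqeval : ∀ x : ι → ℝ, G (Φ x) = eval x q := by
    intro x
    have hdet : eval x q = (Mpoly.map (eval x)).det := RingHom.map_det _ _
    have hmat : (khatriRao (Matrix.of (Φ x).2) (Matrix.of (Φ x).1)).submatrix ρ c
        = Mpoly.map (eval x) := by
      ext k l
      simp [hMp, khatriRao, hΦ]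
    show ((khatriRao (Matrix.of (Φ x).2) (Matrix.of (Φ x).1)).submatrix ρ c).det = eval x q
    rw [hmat, hdet]
  have hpre : Φ ⁻¹' {p | G p = 0} = {x : ι → ℝ | eval x q = 0} := by
    ext x
    simp [Set.mem_preimage, hqeval x]
  have hGmeas : MeasurableSet {p : (Fin I → Fin R → ℝ) × (Fin J → Fin R → ℝ) | G p = 0} := by
    have hcont : Continuous G := by
      apply Continuous.matrix_det
      apply continuous_matrix
      intro k l
      dsimp [khatriRao, Matrix.submatrix]
      fun_prop
    exact (isClosed_eq hcont continuous_const).measurableSet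
  have hnull : volume {p : (Fin I → Fin R → ℝ) × (Fin J → Fin R → ℝ) | G p = 0} = 0 := by
    rw [← hΦmp.measure_preimage hGmeas.nullMeasurableSet, hpre]
    exact nullpoly ι q hq0
  exact measure_mono_null hsub hnull

end Aux2
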